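/- Let g ∈ Aut(ℚ, ≤) satisfy g a < a for every a ∈ ℚ. Let X and B be finite subsets of ℚ and let b_1, …, b_l ∈ ℚ with no entry in X. Then there exist a_1, …, a_l ∈ ℚ realizing the same quantifier-free order type over X as b_1, …, b_l (for all s, t: a_s < a_t iff b_s < b_t, and for every x ∈ X: a_s < x iff b_s < x; in particular no a_s lies in X) such that: (1) {a_1, …, a_l} is independent from B over X, i.e., for every s and every c ∈ B with c ∉ X, if a_s < c then there exists x ∈ X with a_s < x < c; and (2) whenever a_s ≤ g a_t for some s, t, there exists x ∈ X with a_s ≤ x ≤ g a_t. -/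
import Mathlib


lemma exists_avoid (Lo U A : Finset ℚ) (h : ∀ l ∈ Lo, ∀ u ∈ U, l < u) :
    ∃ α : ℚ, α ∉ A ∧ (∀ l ∈ Lo, l < α) ∧ (∀ u ∈ U, α < u) := by
  classical
  have hS : ∃ S : Set ℚ, S.Infinite ∧ ∀ α ∈ S, (∀ l ∈ Lo, l < α) ∧ (∀ u ∈ U, α < u) := by
    rcases Lo.eq_empty_or_nonempty with hLo | hLo <;>
      rcases U.eq_empty_or_nonempty with hU | hU
    · exact ⟨Set.univ, Set.infinite_univ, by simp [hLo, hU]⟩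
    · exact ⟨Set.Iio (U.min' hU), Set.Iio_infinite _, fun α hα =>
        ⟨by simp [hLo], fun u hu => lt_of_lt_of_le hα (U.min'_le u hu)⟩⟩
    · exact ⟨Set.Ioi (Lo.max' hLo), Set.Ioi_infinite _, fun α hα =>
        ⟨fun l hl => lt_of_le_of_lt (Lo.le_max' l hl) hα, by simp [hU]⟩⟩
    · exact ⟨Set.Ioo (Lo.max' hLo) (U.min' hU),
        Set.Ioo_infinite (h _ (Lo.max'_mem hLo) _ (U.min'_mem hU)), fun α hα =>
        ⟨fun l hl => lt_of_le_of_lt (Lo.le_max' l hl) hα.1,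
         fun u hu => lt_of_lt_of_le hα.2 (U.min'_le u hu)⟩⟩
  obtain ⟨S, hinf, hprop⟩ := hS
  obtain ⟨α, hαS, hαA⟩ := (hinf.diff A.finite_toSet).nonempty
  exact ⟨α, by simpa using hαA, (hprop α hαS).1, (hprop α hαS).2⟩

/-- The invariant maintained while building the map `f` on a finite set `S` of values. -/
def InvQ (X B : Finset ℚ) (G : Equiv.Perm ℚ) (S : Finset ℚ) (f : ℚ → ℚ) : Prop :=
  (∀ u ∈ S, ∀ w ∈ S, (f u < f w ↔ u < w)) ∧
  (∀ u ∈ S, ∀ x ∈ X, (f u < x ↔ u < x) ∧ (x < f u ↔ x < u)) ∧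
  (∀ u ∈ S, ∀ c ∈ B, c ∉ X → f u < c → ∃ x ∈ X, f u < x ∧ x < c) ∧
  (∀ u ∈ S, ∀ w ∈ S, f u ≤ G (f w) → ∃ x ∈ X, f u ≤ x ∧ x ≤ G (f w)) ∧
  (∀ u ∈ S, f u ∉ B)

lemma stepQ (X B : Finset ℚ) (G : Equiv.Perm ℚ) (hg : ∀ a : ℚ, G a < a)
    (W : Finset ℚ) (f₀ : ℚ → ℚ) (hInv : InvQ X B G W f₀)
    (v : ℚ) (hvX : v ∉ X) (hvW : ∀ w ∈ W, v < w) :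
    ∃ α : ℚ, InvQ X B G (insert v W) (Function.update f₀ v α) := by
  classical
  obtain ⟨J1, J2, J3, J4, J5⟩ := hInv
  have hvnW : v ∉ W := fun h => lt_irrefl v (hvW v h)
  set U : Finset ℚ := X.filter (fun x => v < x) ∪ W.image f₀ with hUdef
  set Lo : Finset ℚ := (X.filter (fun x => x < v)
      ∪ B.filter (fun c => c ∉ X ∧ ∀ u ∈ U, c < u))
      ∪ (W.image (fun w => G (f₀ w))).filter (fun y => ∀ u ∈ U, y < u) with hLodef
  have hLoU : ∀ l ∈ Lo, ∀ u ∈ U, l < u := by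
    intro l hl u hu
    rw [hLodef, Finset.mem_union, Finset.mem_union] at hl
    rcases hl with (hl | hl) | hl
    · rw [Finset.mem_filter] at hl
      rw [hUdef, Finset.mem_union] at hu
      rcases hu with hu | hu
      · rw [Finset.mem_filter] at hu
        exact hl.2.trans hu.2
      · obtain ⟨w, hw, rfl⟩ := Finset.mem_image.mp hu
        exact ((J2 w hw l hl.1).2).mpr (hl.2.trans (hvW w hw))
    · exact (Finset.mem_filter.mp hl).2.2 u hu
    · exact (Finset.mem_filter.mp hl).2 u hu
  obtain ⟨α, hαBX, hαLo, hαU⟩ := exists_avoid Lo U (B ∪ X) hLoU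
  have hαB : α ∉ B := fun h => hαBX (Finset.mem_union_left _ h)
  have hαX : α ∉ X := fun h => hαBX (Finset.mem_union_right _ h)
  have hαW : ∀ w ∈ W, α < f₀ w := fun w hw =>
    hαU _ (Finset.mem_union_right _ (Finset.mem_image_of_mem f₀ hw))
  have hαXgt : ∀ x ∈ X, v < x → α < x := fun x hx hvx =>
    hαU x (Finset.mem_union_left _ (Finset.mem_filter.mpr ⟨hx, hvx⟩))
  have hαXlt : ∀ x ∈ X, x < v → x < α := fun x hx hxv =>
    hαLo x (Finset.mem_union_left _ (Finset.mem_union_left _ (Finset.mem_filter.mpr ⟨hx, hxv⟩)))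
  have keyB : ∀ c ∈ B, c ∉ X → (∀ u ∈ U, c < u) → c < α := fun c hc hcX h =>
    hαLo c (Finset.mem_union_left _ (Finset.mem_union_right _
      (Finset.mem_filter.mpr ⟨hc, hcX, h⟩)))
  have keyG : ∀ w ∈ W, (∀ u ∈ U, G (f₀ w) < u) → G (f₀ w) < α := fun w hw h =>
    hαLo _ (Finset.mem_union_right _
      (Finset.mem_filter.mpr ⟨Finset.mem_image_of_mem _ hw, h⟩))
  have hfv : Function.update f₀ v α v = α := Function.update_self v α f₀
  have hfw : ∀ w ∈ W, Function.update f₀ v α w = f₀ w := fun w hw =>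
    Function.update_of_ne (by rintro rfl; exact hvnW hw) _ _
  refine ⟨α, ?_, ?_, ?_, ?_, ?_⟩
  · -- J1
    intro u hu w hw
    rcases Finset.mem_insert.mp hu with hu1 | hu1
    · rcases Finset.mem_insert.mp hw with hw1 | hw1
      · rw [hu1, hw1, hfv]
        exact iff_of_false (lt_irrefl _) (lt_irrefl _)
      · rw [hu1, hfv, hfw w hw1]
        exact iff_of_true (hαW w hw1) (hvW w hw1)
    · rcases Finset.mem_insert.mp hw with hw1 | hw1
      · rw [hw1, hfv, hfw u hu1]
        exact iff_of_false (not_lt.mpr (hαW u hu1).le) (not_lt.mpr (hvW u hu1).le)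
      · rw [hfw u hu1, hfw w hw1]; exact J1 u hu1 w hw1
  · -- J2
    intro u hu x hx
    rcases Finset.mem_insert.mp hu with hu1 | hu1
    · rw [hu1, hfv]
      rcases lt_trichotomy v x with h | h | h
      · exact ⟨iff_of_true (hαXgt x hx h) h,
          iff_of_false (not_lt.mpr (hαXgt x hx h).le) (not_lt.mpr h.le)⟩
      · exact absurd (h ▸ hx) hvX
      · exact ⟨iff_of_false (not_lt.mpr (hαXlt x hx h).le) (not_lt.mpr h.le),
          iff_of_true (hαXlt x hx h) h⟩
    · rw [hfw u hu1]; exact J2 u hu1 x hx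
  · -- J3
    intro u hu c hc hcX hlt
    rcases Finset.mem_insert.mp hu with hu1 | hu1
    · rw [hu1, hfv] at hlt ⊢
      by_cases hall : ∀ u' ∈ U, c < u'
      · exact absurd (keyB c hc hcX hall) (not_lt.mpr hlt.le)
      · push_neg at hall
        obtain ⟨u', hu', huc⟩ := hall
        rw [hUdef, Finset.mem_union] at hu'
        rcases hu' with hu' | hu'
        · rw [Finset.mem_filter] at hu'
          refine ⟨u', hu'.1, hαXgt u' hu'.1 hu'.2, lt_of_le_of_ne huc ?_⟩
          rintro rfl; exact hcX hu'.1
        · obtain ⟨w, hw, rfl⟩ := Finset.mem_image.mp hu'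
          have hne : f₀ w ≠ c := by rintro rfl; exact J5 w hw hc
          obtain ⟨x, hx, hx1, hx2⟩ := J3 w hw c hc hcX (lt_of_le_of_ne huc hne)
          exact ⟨x, hx, (hαW w hw).trans hx1, hx2⟩
    · rw [hfw u hu1] at hlt ⊢; exact J3 u hu1 c hc hcX hlt
  · -- J4
    intro u hu w hw hle
    rcases Finset.mem_insert.mp hu with hu1 | hu1
    · rcases Finset.mem_insert.mp hw with hw1 | hw1
      · rw [hu1, hw1, hfv] at hle
        exact absurd hle (not_le.mpr (hg α))
      · rw [hu1, hfv, hfw w hw1] at hle ⊢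
        by_cases hall : ∀ u' ∈ U, G (f₀ w) < u'
        · exact absurd (keyG w hw1 hall) (not_lt.mpr hle)
        · push_neg at hall
          obtain ⟨u', hu', huc⟩ := hall
          rw [hUdef, Finset.mem_union] at hu'
          rcases hu' with hu' | hu'
          · rw [Finset.mem_filter] at hu'
            exact ⟨u', hu'.1, (hαXgt u' hu'.1 hu'.2).le, huc⟩
          · obtain ⟨w', hw'', rfl⟩ := Finset.mem_image.mp hu'
            obtain ⟨x, hx, hx1, hx2⟩ := J4 w' hw'' w hw1 huc
            exact ⟨x, hx, ((hαW w' hw'').le).trans hx1, hx2⟩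
    · rcases Finset.mem_insert.mp hw with hw1 | hw1
      · rw [hfw u hu1, hw1, hfv] at hle
        exact absurd ((hg α).trans (hαW u hu1)) (not_lt.mpr hle)
      · rw [hfw u hu1, hfw w hw1] at hle ⊢; exact J4 u hu1 w hw1 hle
  · -- J5
    intro u hu
    rcases Finset.mem_insert.mp hu with hu1 | hu1
    · rw [hu1, hfv]; exact hαB
    · rw [hfw u hu1]; exact J5 u hu1

lemma auxQ (X B : Finset ℚ) (G : Equiv.Perm ℚ) (hg : ∀ a : ℚ, G a < a) :
    ∀ n (V : Finset ℚ), V.card = n → (∀ v ∈ V, v ∉ X) →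
    ∀ (W : Finset ℚ) (f₀ : ℚ → ℚ), (∀ w ∈ W, ∀ v ∈ V, v < w) → InvQ X B G W f₀ →
    ∃ f, InvQ X B G (V ∪ W) f := by
  intro n
  induction n with
  | zero =>
    intro V hV hVX W f₀ hWV hInv
    have hVe : V = ∅ := Finset.card_eq_zero.mp hV
    subst hVe
    exact ⟨f₀, by simpa using hInv⟩
  | succ n ih =>
    intro V hV hVX W f₀ hWV hInv
    have hne : V.Nonempty := Finset.card_pos.mp (by omega)
    set v := V.max' hne with hv
    have hvV : v ∈ V := V.max'_mem hne
    obtain ⟨α, hInv'⟩ := stepQ X B G hg W f₀ hInv v (hVX v hvV)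
      (fun w hw => hWV w hw v hvV)
    obtain ⟨f, hfInv⟩ := ih (V.erase v)
      (by rw [Finset.card_erase_of_mem hvV, hV]; rfl)
      (fun v' hv' => hVX _ (Finset.mem_of_mem_erase hv'))
      (insert v W) (Function.update f₀ v α)
      (by
        intro w hw v' hv'
        rcases Finset.mem_insert.mp hw with rfl | hw
        · exact lt_of_le_of_ne (V.le_max' v' (Finset.mem_of_mem_erase hv'))
            (Finset.ne_of_mem_erase hv')
        · exact hWV w hw v' (Finset.mem_of_mem_erase hv'))
      hInv'
    refine ⟨f, ?_⟩
    have heq : V.erase v ∪ insert v W = V ∪ W := by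
      rw [Finset.union_insert, ← Finset.insert_union, Finset.insert_erase hvV]
    rwa [heq] at hfInv


/-- The automorphism group of `(ℚ, ≤)`, as a subgroup of `Equiv.Perm ℚ`. -/
def QAut : Subgroup (Equiv.Perm ℚ) where
  carrier := {g | ∀ a b : ℚ, a ≤ b ↔ g a ≤ g b}
  one_mem' := fun _ _ => Iff.rfl
  mul_mem' := by
    intro g h hg hh a b
    exact (hh a b).trans (hg (h a) (h b))
  inv_mem' := by
    intro g hg a b
    simpa using (hg (g⁻¹ a) (g⁻¹ b)).symm

/-- `f` has a single `+`-orbital: there is `a` with `a < f a` whose orbit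
`{f^k a : k ∈ ℤ}` is unbounded above and below in `ℚ`. -/
def SinglePlusQ (f : Equiv.Perm ℚ) : Prop :=
  ∃ a : ℚ, a < f a ∧ (∀ x : ℚ, ∃ k : ℤ, x < (f ^ k) a) ∧ (∀ x : ℚ, ∃ k : ℤ, (f ^ k) a < x)

/-- `f` has a single `−`-orbital: there is `a` with `f a < a` whose orbit
`{f^k a : k ∈ ℤ}` is unbounded above and below in `ℚ`. -/
def SingleMinusQ (f : Equiv.Perm ℚ) : Prop :=
  ∃ a : ℚ, f a < a ∧ (∀ x : ℚ, ∃ k : ℤ, x < (f ^ k) a) ∧ (∀ x : ℚ, ∃ k : ℤ, (f ^ k) a < x)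

/-- `f` has a `+`-orbital unbounded above. -/
def PlusUnbAboveQ (f : Equiv.Perm ℚ) : Prop :=
  ∃ a : ℚ, a < f a ∧ ∀ x : ℚ, ∃ k : ℤ, x < (f ^ k) a

/-- `f` has a `−`-orbital unbounded below. -/
def MinusUnbBelowQ (f : Equiv.Perm ℚ) : Prop :=
  ∃ b : ℚ, f b < b ∧ ∀ x : ℚ, ∃ k : ℤ, (f ^ k) b < x

/-- Let `g ∈ Aut(ℚ, ≤)` with `g a < a` for all `a`. For finite
`X, B ⊆ ℚ` and a tuple `b` avoiding `X`, there is a tuple `a` with the same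
quantifier-free order type over `X` such that `a` is independent from `B` over `X`
and whenever `a s ≤ g (a t)` there is `x ∈ X` with `a s ≤ x ≤ g (a t)`. -/
theorem stmt15 (g : QAut) (hg : ∀ a : ℚ, (g : Equiv.Perm ℚ) a < a)
    (X B : Finset ℚ) (l : ℕ) (b : Fin l → ℚ) (hb : ∀ s, b s ∉ X) :
    ∃ a : Fin l → ℚ,
      (∀ s t : Fin l, (a s < a t ↔ b s < b t)) ∧
      (∀ s : Fin l, ∀ x ∈ X, (a s < x ↔ b s < x) ∧ (x < a s ↔ x < b s)) ∧
      (∀ s : Fin l, ∀ c ∈ B, c ∉ X → a s < c → ∃ x ∈ X, a s < x ∧ x < c) ∧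
      (∀ s t : Fin l, a s ≤ (g : Equiv.Perm ℚ) (a t) →
        ∃ x ∈ X, a s ≤ x ∧ x ≤ (g : Equiv.Perm ℚ) (a t)) := by
  classical
  obtain ⟨f, J1, J2, J3, J4, -⟩ := auxQ X B (g : Equiv.Perm ℚ) hg
    (Finset.image b Finset.univ).card (Finset.image b Finset.univ) rfl
    (by
      intro v hv
      obtain ⟨s, -, rfl⟩ := Finset.mem_image.mp hv
      exact hb s)
    ∅ id (by simp) ⟨by simp, by simp, by simp, by simp, by simp⟩
  have hmem : ∀ s : Fin l, b s ∈ Finset.image b Finset.univ ∪ ∅ :=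
    fun s => Finset.mem_union_left _ (Finset.mem_image_of_mem b (Finset.mem_univ s))
  exact ⟨fun s => f (b s),
    fun s t => J1 _ (hmem s) _ (hmem t),
    fun s x hx => J2 _ (hmem s) x hx,
    fun s c hc hcX => J3 _ (hmem s) c hc hcX,
    fun s t => J4 _ (hmem s) _ (hmem t)⟩
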